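/- Let μ : {compact subintervals of [a,b]} → ℝ be interval-additive and let ρ : [a,b] → ℝ be a function. Then the following are equivalent: (1) ρ is the strict derivative of μ with respect to length on [a,b] (for each x and ε > 0 there is δ > 0 with |μ(I)/|I| - ρ(x)| < ε for all nondegenerate intervals I ⊆ (x-δ,x+δ) ∩ [a,b]); (2) ρ is continuous on [a,b] and μ([c,d]) = ∫_c^d ρ(t) dt for all a ≤ c ≤ d ≤ b. -/

import Mathlib

/-- `μ c d` is the value of the set function on the interval `[c,d]`;
interval-additivity: `μ [c,e] = μ [c,d] + μ [d,e]` for `c ≤ d ≤ e` in `[a,b]`. -/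
def IntervalAdditive (a b : ℝ) (μ : ℝ → ℝ → ℝ) : Prop :=
  ∀ c d e : ℝ, a ≤ c → c ≤ d → d ≤ e → e ≤ b → μ c e = μ c d + μ d e

/-- `g` is the Peano strict derivative of the interval function `μ` with respect
to length on `[a,b]`: for every `x ∈ [a,b]` and `ε > 0` there is `δ > 0` with
`|μ [c,d] / (d - c) - g x| < ε` for every nondegenerate interval
`[c,d] ⊆ (x - δ, x + δ) ∩ [a,b]`. -/
def PeanoStrictDeriv (a b : ℝ) (μ : ℝ → ℝ → ℝ) (g : ℝ → ℝ) : Prop :=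
  ∀ x ∈ Set.Icc a b, ∀ ε > 0, ∃ δ > 0, ∀ c d : ℝ, a ≤ c → c < d → d ≤ b →
    Set.Icc c d ⊆ Set.Ioo (x - δ) (x + δ) → |μ c d / (d - c) - g x| < ε

open Set intervalIntegral MeasureTheory

/-- Auxiliary: the key estimate for the integral of a continuous function. -/
lemma peano_integral_est {a b : ℝ} {ρ : ℝ → ℝ} (hρ : ContinuousOn ρ (Set.Icc a b))
    {x : ℝ} (hx : x ∈ Set.Icc a b) {ε : ℝ} (hε : 0 < ε) :
    ∃ δ > 0, ∀ c d : ℝ, a ≤ c → c < d → d ≤ b →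
      Set.Icc c d ⊆ Set.Ioo (x - δ) (x + δ) →
      |(∫ t in c..d, ρ t) / (d - c) - ρ x| < ε := by
  have hcx : ContinuousWithinAt ρ (Set.Icc a b) x := hρ x hx
  rw [Metric.continuousWithinAt_iff] at hcx
  obtain ⟨δ, hδ, hδ'⟩ := hcx (ε / 2) (by linarith)
  refine ⟨δ, hδ, fun c d hac hcd hdb hsub => ?_⟩
  have hdc : (0:ℝ) < d - c := by linarith
  have hsubab : Set.Icc c d ⊆ Set.Icc a b := Set.Icc_subset_Icc hac hdb
  have hint : IntervalIntegrable ρ MeasureTheory.volume c d :=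
    (hρ.mono hsubab).intervalIntegrable_of_Icc hcd.le
  have hbound : ∀ t ∈ Set.uIoc c d, ‖ρ t - ρ x‖ ≤ ε / 2 := by
    intro t ht
    rw [Set.uIoc_of_le hcd.le] at ht
    have htcd : t ∈ Set.Icc c d := ⟨ht.1.le, ht.2⟩
    have htab : t ∈ Set.Icc a b := hsubab htcd
    have htoo := hsub htcd
    have hdist : dist t x < δ := by
      rw [Real.dist_eq, abs_lt]
      constructor <;> [linarith [htoo.1]; linarith [htoo.2]]
    exact le_of_lt (hδ' htab hdist)
  have hintsub : IntervalIntegrable (fun t => ρ t - ρ x) MeasureTheory.volume c d :=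
    hint.sub intervalIntegrable_const
  have hineq : ‖∫ t in c..d, (ρ t - ρ x)‖ ≤ ε / 2 * |d - c| :=
    intervalIntegral.norm_integral_le_of_norm_le_const hbound
  have hval : ∫ t in c..d, (ρ t - ρ x) = (∫ t in c..d, ρ t) - (d - c) * ρ x := by
    rw [intervalIntegral.integral_sub hint intervalIntegrable_const,
      intervalIntegral.integral_const, smul_eq_mul]
  have heq : (∫ t in c..d, ρ t) / (d - c) - ρ x
      = (∫ t in c..d, (ρ t - ρ x)) / (d - c) := by
    rw [hval]; field_simp
  rw [heq, abs_div, abs_of_pos hdc]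
  rw [Real.norm_eq_abs, abs_of_pos hdc] at hineq
  calc |∫ t in c..d, (ρ t - ρ x)| / (d - c) ≤ ε / 2 * (d - c) / (d - c) := by
        gcongr
    _ = ε / 2 := by rw [mul_div_assoc, div_self hdc.ne', mul_one]
    _ < ε := by linarith

/-- Peano's fundamental theorem (1887): `ρ` is the strict derivative of the
interval-additive set function `μ` with respect to length on `[a,b]` iff `ρ` is
continuous on `[a,b]` and `μ` is the integral of `ρ`. -/
theorem peano_mass_density (a b : ℝ) (hab : a ≤ b) (μ : ℝ → ℝ → ℝ)
    (hμ : IntervalAdditive a b μ) (ρ : ℝ → ℝ) :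
    PeanoStrictDeriv a b μ ρ ↔
      (ContinuousOn ρ (Set.Icc a b) ∧
        ∀ c d : ℝ, a ≤ c → c ≤ d → d ≤ b → μ c d = ∫ t in c..d, ρ t) := by
  have hμ0 : ∀ c : ℝ, a ≤ c → c ≤ b → μ c c = 0 := by
    intro c hac hcb
    have := hμ c c c hac le_rfl le_rfl hcb
    linarith
  constructor
  · intro hP
    -- Continuity of ρ on [a,b]
    have hcont : ContinuousOn ρ (Set.Icc a b) := by
      intro x hx
      rw [Metric.continuousWithinAt_iff]
      intro ε hε
      obtain ⟨δx, hδx, hδx'⟩ := hP x hx (ε / 2) (by linarith)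
      refine ⟨δx / 2, by linarith, fun y hy hyx => ?_⟩
      rcases eq_or_ne y x with rfl | hne
      · simpa using hε
      · have haltb : a < b := by
          rcases lt_or_eq_of_le hab with h | h
          · exact h
          · subst h
            exact absurd (show y = x from by
              have h1 : y = a := le_antisymm hy.2 hy.1
              have h2 : x = a := le_antisymm hx.2 hx.1
              rw [h1, h2]) hne
        obtain ⟨δy, hδy, hδy'⟩ := hP y hy (ε / 2) (by linarith)
        have hyxd : |y - x| < δx / 2 := by rwa [Real.dist_eq] at hyx
        set r : ℝ := min δy (δx - |y - x|) with hr
        have hrpos : 0 < r := lt_min hδy (by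
          have := abs_nonneg (y - x); linarith [hyxd])
        have hr1 : r ≤ δy := min_le_left _ _
        have hr2 : r ≤ δx - |y - x| := min_le_right _ _
        -- choose a nondegenerate interval [c,d] near y
        obtain ⟨c, d, hac, hcd, hdb, hnear⟩ :
            ∃ c d : ℝ, a ≤ c ∧ c < d ∧ d ≤ b ∧ ∀ t ∈ Set.Icc c d, |t - y| ≤ r / 2 := by
          rcases lt_or_eq_of_le hy.2 with hyb | hyb
          · refine ⟨y, min b (y + r / 2), hy.1, ?_, min_le_left _ _, ?_⟩
            · exact lt_min hyb (by linarith)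
            · intro t ht
              have h1 : y ≤ t := ht.1
              have h2 : t ≤ y + r / 2 := ht.2.trans (min_le_right _ _)
              rw [abs_le]; constructor <;> linarith
          · refine ⟨max a (y - r / 2), y, le_max_left _ _, ?_, hy.2, ?_⟩
            · exact max_lt (hyb ▸ haltb) (by linarith)
            · intro t ht
              have h1 : y - r / 2 ≤ t := (le_max_right _ _).trans ht.1
              have h2 : t ≤ y := ht.2
              rw [abs_le]; constructor <;> linarith
        have hsuby : Set.Icc c d ⊆ Set.Ioo (y - δy) (y + δy) := by
          intro t ht
          have := hnear t ht
          rw [abs_le] at this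
          constructor <;> [linarith [this.1, hrpos, hr1]; linarith [this.2, hrpos, hr1]]
        have hsubx : Set.Icc c d ⊆ Set.Ioo (x - δx) (x + δx) := by
          intro t ht
          have h1 := abs_le.mp (hnear t ht)
          have h2 : |y - x| ≤ δx - r := by linarith [hr2]
          have h3 := abs_le.mp h2
          constructor <;> [linarith [h1.1, h3.1, hrpos]; linarith [h1.2, h3.2, hrpos]]
        have h1 := hδx' c d hac hcd hdb hsubx
        have h2 := hδy' c d hac hcd hdb hsuby
        rw [Real.dist_eq]
        calc |ρ y - ρ x| ≤ |μ c d / (d - c) - ρ y| + |μ c d / (d - c) - ρ x| := by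
              have := abs_sub (μ c d / (d - c) - ρ x) (μ c d / (d - c) - ρ y)
              rw [abs_sub_comm]
              calc |ρ x - ρ y| = |(μ c d / (d - c) - ρ y) - (μ c d / (d - c) - ρ x)| := by
                    ring_nf
                _ ≤ |μ c d / (d - c) - ρ y| + |μ c d / (d - c) - ρ x| := by
                    exact (abs_sub _ _)
          _ < ε := by linarith
    -- f := μ a ·, g := primitive of ρ
    set f : ℝ → ℝ := fun d => μ a d with hf
    set g : ℝ → ℝ := fun d => ∫ t in a..d, ρ t with hg
    have hintab : ∀ c d : ℝ, a ≤ c → c ≤ d → d ≤ b →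
        IntervalIntegrable ρ MeasureTheory.volume c d := fun c d h1 h2 h3 =>
      (hcont.mono (Set.Icc_subset_Icc h1 h3)).intervalIntegrable_of_Icc h2
    have fderiv : ∀ x ∈ Set.Ico a b, HasDerivWithinAt f (ρ x) (Set.Ici x) x := by
      intro x hx
      rw [hasDerivWithinAt_iff_tendsto_slope, Set.Ici_sdiff_left]
      rw [Metric.tendsto_nhdsWithin_nhds]
      intro ε hε
      obtain ⟨δ, hδ, hδ'⟩ := hP x ⟨hx.1, hx.2.le⟩ ε hε
      refine ⟨min δ (b - x), lt_min hδ (by linarith [hx.2]), fun d hd hdist => ?_⟩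
      rw [Real.dist_eq] at hdist
      have hxd : x < d := hd
      have hdxlt : d - x < min δ (b - x) := by
        rw [abs_of_pos (by linarith : (0:ℝ) < d - x)] at hdist; exact hdist
      have hdb : d ≤ b := by linarith [min_le_right δ (b - x), hdxlt]
      have hsub : Set.Icc x d ⊆ Set.Ioo (x - δ) (x + δ) := by
        intro t ht
        constructor
        · linarith [ht.1]
        · linarith [ht.2, min_le_left δ (b - x), hdxlt]
      have hkey := hδ' x d hx.1 hxd hdb hsub
      have hadd := hμ a x d le_rfl hx.1 hxd.le hdb
      rw [Real.dist_eq, slope_def_field]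
      have : (f d - f x) / (d - x) = μ x d / (d - x) := by
        simp only [hf]; rw [hadd]; ring
      rw [this]
      exact hkey
    have fcont : ContinuousOn f (Set.Icc a b) := by
      intro x hx
      rw [Metric.continuousWithinAt_iff]
      intro ε hε
      obtain ⟨δ, hδ, hδ'⟩ := hP x hx 1 one_pos
      set M : ℝ := |ρ x| + 1 with hM
      have hMpos : 0 < M := by positivity
      have key : ∀ c d : ℝ, a ≤ c → c < d → d ≤ b →
          Set.Icc c d ⊆ Set.Ioo (x - δ) (x + δ) → |μ c d| < M * (d - c) := by
        intro c d h1 h2 h3 h4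
        have h5 := hδ' c d h1 h2 h3 h4
        have hdc : (0:ℝ) < d - c := by linarith
        have : |μ c d / (d - c)| < M := by
          calc |μ c d / (d - c)| = |μ c d / (d - c) - ρ x + ρ x| := by ring_nf
            _ ≤ |μ c d / (d - c) - ρ x| + |ρ x| := abs_add_le _ _
            _ < M := by rw [hM]; linarith
        rw [abs_div, abs_of_pos hdc, div_lt_iff₀ hdc] at this
        linarith [this]
      refine ⟨min δ (ε / M), lt_min hδ (by positivity), fun y hy hyx => ?_⟩
      rw [Real.dist_eq] at hyx ⊢
      have hyx1 : |y - x| < δ := lt_of_lt_of_le hyx (min_le_left _ _)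
      have hyx2 : |y - x| < ε / M := lt_of_lt_of_le hyx (min_le_right _ _)
      rcases lt_trichotomy y x with h | h | h
      · have hadd := hμ a y x le_rfl hy.1 h.le hx.2
        have hsub : Set.Icc y x ⊆ Set.Ioo (x - δ) (x + δ) := by
          intro t ht
          have := abs_lt.mp hyx1
          constructor <;> [linarith [ht.1, this.1]; linarith [ht.2]]
        have := key y x hy.1 h hx.2 hsub
        have habs : |y - x| = x - y := by rw [abs_of_neg (by linarith : y - x < 0)]; ring
        have hfin : M * (x - y) < ε := by
          have : x - y < ε / M := habs ▸ hyx2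
          calc M * (x - y) < M * (ε / M) := by
                exact mul_lt_mul_of_pos_left this hMpos
            _ = ε := by field_simp
        have : |f y - f x| = |μ y x| := by
          simp only [hf]; rw [hadd]; rw [show μ a y - (μ a y + μ y x) = -μ y x by ring,
            abs_neg]
        rw [this]
        linarith [key y x hy.1 h hx.2 hsub]
      · simp [h, hε]
      · have hadd := hμ a x y le_rfl hx.1 h.le hy.2
        have hsub : Set.Icc x y ⊆ Set.Ioo (x - δ) (x + δ) := by
          intro t ht
          have := abs_lt.mp hyx1
          constructor <;> [linarith [ht.1]; linarith [ht.2, this.2]]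
        have hkey := key x y hx.1 h hy.2 hsub
        have habs : |y - x| = y - x := abs_of_pos (by linarith)
        have hfin : M * (y - x) < ε := by
          have : y - x < ε / M := habs ▸ hyx2
          calc M * (y - x) < M * (ε / M) := mul_lt_mul_of_pos_left this hMpos
            _ = ε := by field_simp
        have : |f y - f x| = |μ x y| := by
          simp only [hf]; rw [hadd, show μ a x + μ x y - μ a x = μ x y by ring]
        rw [this]
        linarith
    have gcont : ContinuousOn g (Set.Icc a b) := by
      have := intervalIntegral.continuousOn_primitive_interval
        (μ := MeasureTheory.volume) (f := ρ) (a := a) (b := b)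
        (by rw [Set.uIcc_of_le hab]; exact hcont.integrableOn_Icc)
      rwa [Set.uIcc_of_le hab] at this
    have gderiv : ∀ x ∈ Set.Ico a b, HasDerivWithinAt g (ρ x) (Set.Ici x) x := by
      intro x hx
      have hxb : x < b := hx.2
      have hint : IntervalIntegrable ρ MeasureTheory.volume a x :=
        hintab a x le_rfl hx.1 hx.2.le
      have hmemIcc : Set.Icc x b ∈ nhdsWithin x (Set.Ioi x) := by
        rw [mem_nhdsWithin]
        exact ⟨Set.Iio b, isOpen_Iio, hxb, fun t ht => ⟨ht.2.le, ht.1.le⟩⟩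
      have hmeas : StronglyMeasurableAtFilter ρ (nhdsWithin x (Set.Ioi x))
          MeasureTheory.volume :=
        ⟨Set.Icc x b, hmemIcc,
          ((hcont.mono (Set.Icc_subset_Icc hx.1 le_rfl)).aestronglyMeasurable
            measurableSet_Icc)⟩
      have hcw : ContinuousWithinAt ρ (Set.Ioi x) x := by
        have h1 : ContinuousWithinAt ρ (Set.Icc x b) x :=
          (hcont x ⟨hx.1, hx.2.le⟩).mono (Set.Icc_subset_Icc hx.1 le_rfl)
        rw [ContinuousWithinAt, nhdsWithin_Icc_eq_nhdsGE hxb] at h1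
        exact ContinuousWithinAt.mono h1 Set.Ioi_subset_Ici_self
      exact intervalIntegral.integral_hasDerivWithinAt_right hint hmeas hcw
    have heq : ∀ y ∈ Set.Icc a b, f y = g y := by
      refine eq_of_has_deriv_right_eq fderiv gderiv fcont gcont ?_
      simp only [hf, hg, intervalIntegral.integral_same]
      exact hμ0 a le_rfl hab
    refine ⟨hcont, fun c d hac hcd hdb => ?_⟩
    have h1 : μ a d = ∫ t in a..d, ρ t := heq d ⟨hac.trans hcd, hdb⟩
    have h2 : μ a c = ∫ t in a..c, ρ t := heq c ⟨hac, hcd.trans hdb⟩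
    have hadd := hμ a c d le_rfl hac hcd hdb
    have hsub := intervalIntegral.integral_interval_sub_left
      (hintab a d le_rfl (hac.trans hcd) hdb) (hintab a c le_rfl hac (hcd.trans hdb))
    have : μ c d = μ a d - μ a c := by linarith
    rw [this, h1, h2, hsub]
  · rintro ⟨hcont, hint⟩
    intro x hx ε hε
    obtain ⟨δ, hδ, hδ'⟩ := peano_integral_est hcont hx hε
    refine ⟨δ, hδ, fun c d hac hcd hdb hsub => ?_⟩
    rw [hint c d hac hcd.le hdb]
    exact hδ' c d hac hcd hdb hsub
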